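/- Suppose f is K-submodular and K-GO-concave, and let η ∈ (0, 1] satisfy, for every 1 ≤ i ≤ K − 1, K·f(G_i) − (K·f(G_i ⊕ Ō_{K−i}) − (K − i)·f(O_K)) ≤ η·(K − i)·f(G_i). Then the greedy strategy satisfies f(G_K) ≥ (1/η)·(1 − (1 − η/K)^K)·f(O_K). -/

import Mathlib

/-- If `f` is K-submodular and K-GO-concave, and its curvature is at most
`η ∈ (0,1]`, then the greedy strategy satisfies
`f(G_K) ≥ (1/η)·(1 − (1 − η/K)^K)·f(O_K)`. -/
theorem stmt3 {α : Type*} [Nonempty α] (K : ℕ) (hK : 1 ≤ K)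
    (f : List α → ℝ) (hf0 : f [] = 0) (g o : ℕ → α) (η : ℝ)
    (hη0 : 0 < η) (hη1 : η ≤ 1)
    -- O_K is an optimal strategy of length K
    (hopt : ∀ M : List α, M.length ≤ K → f ((List.range K).map o) ≥ f M)
    -- G_K is a greedy strategy
    (hgreedy : ∀ i < K, ∀ a : α,
      f ((List.range i).map g ++ [g i]) ≥ f ((List.range i).map g ++ [a]))
    -- f is K-monotone
    (hmono : ∀ M N : List α, M.length + N.length ≤ K → f (M ++ N) ≥ f M)
    -- f is K-diminishing
    (hdim : ∀ M N : List α, M <+: N → N.length ≤ K - 1 → ∀ a : α,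
      f (M ++ [a]) - f M ≥ f (N ++ [a]) - f N)
    -- f is K-GO-concave
    (hGO : ∀ i : ℕ, 1 ≤ i → i ≤ K - 1 →
      f ((List.range i).map g ++ (List.range (K - i)).map (fun j => o (i + j))) ≥
        ((i : ℝ) / K) * f ((List.range i).map g) +
          (1 - (i : ℝ) / K) * f ((List.range K).map o))
    -- the curvature of f is at most η
    (hcurv : ∀ i : ℕ, 1 ≤ i → i ≤ K - 1 →
      (K : ℝ) * f ((List.range i).map g) -
          ((K : ℝ) * f ((List.range i).map g ++
              (List.range (K - i)).map (fun j => o (i + j))) -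
            ((K : ℝ) - i) * f ((List.range K).map o)) ≤
        η * (((K : ℝ) - i) * f ((List.range i).map g))) :
    f ((List.range K).map g) ≥
      (1 / η) * (1 - (1 - η / (K : ℝ)) ^ K) * f ((List.range K).map o) := by
  have hK0 : (0:ℝ) < K := by exact_mod_cast hK
  set c : ℝ := 1 - η / K with hc
  have hc0 : 0 ≤ c := by
    have : η / K ≤ 1 := by
      rw [div_le_one hK0]
      calc η ≤ 1 := hη1
        _ ≤ (K:ℝ) := by exact_mod_cast hK
    simp only [hc]; linarith
  set F : ℕ → ℝ := fun i => f ((List.range i).map g) with hF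
  set OPT : ℝ := f ((List.range K).map o) with hOPT
  have hF0 : F 0 = 0 := by simp [hF, hf0]
  have hOPT0 : 0 ≤ OPT := by
    have := hopt [] (by simp)
    rw [hf0] at this; linarith
  have hFnonneg : ∀ i, i ≤ K → 0 ≤ F i := by
    intro i hi
    have := hmono [] ((List.range i).map g) (by simpa using hi)
    simp only [List.nil_append, hf0] at this
    exact this
  have hFsucc : ∀ i : ℕ, ((List.range (i+1)).map g) = (List.range i).map g ++ [g i] := by
    intro i; simp [List.range_succ]
  -- key telescoping lemma
  have key : ∀ i, i + 1 ≤ K → ∀ m, m ≤ K - i →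
      f ((List.range i).map g ++ (List.range m).map (fun j => o (i+j))) ≤
        F i + m * (F (i+1) - F i) := by
    intro i hi m
    induction m with
    | zero => intro _; simp [hF]
    | succ m ih =>
      intro hm
      have h1 := ih (Nat.le_of_succ_le hm)
      have hsplit : (List.range (m+1)).map (fun j => o (i+j)) =
          (List.range m).map (fun j => o (i+j)) ++ [o (i+m)] := by
        simp [List.range_succ]
      have hlen : ((List.range i).map g ++ (List.range m).map (fun j => o (i+j))).length ≤ K - 1 := by
        simp only [List.length_append, List.length_map, List.length_range]
        omega
      have hdim' := hdim ((List.range i).map g)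
        ((List.range i).map g ++ (List.range m).map (fun j => o (i+j)))
        (List.prefix_append _ _) hlen (o (i+m))
      have hg := hgreedy i (by omega) (o (i+m))
      have hF1 : F (i+1) = f ((List.range i).map g ++ [g i]) := congrArg f (hFsucc i)
      have hFi : F i = f ((List.range i).map g) := rfl
      rw [hsplit, ← List.append_assoc]
      push_cast
      linarith
  -- step inequality
  have step : ∀ i, i + 1 ≤ K → F i + (OPT - η * F i) / K ≤ F (i+1) := by
    intro i hi
    have hkey := key i hi (K - i) le_rfl
    rcases Nat.eq_zero_or_pos i with h0 | h0
    · subst h0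
      have heq : (List.range (K-0)).map (fun j => o (0+j)) = (List.range K).map o := by
        simp
      rw [heq] at hkey
      simp only [List.range_zero, List.map_nil, List.nil_append, Nat.sub_zero, hF0] at hkey
      have hkey' : OPT ≤ (K:ℝ) * F 1 := by
        rw [hOPT]; push_cast at hkey ⊢; linarith [hkey]
      simp only [hF0, mul_zero, sub_zero, zero_add]
      show OPT / (K:ℝ) ≤ F 1
      rw [div_le_iff₀ hK0]
      nlinarith [hkey']
    · have hcurv' := hcurv i h0 (by omega)
      have hKi : ((K - i : ℕ) : ℝ) = (K:ℝ) - i := by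
        push_cast [Nat.cast_sub (by omega : i ≤ K)]; ring
      rw [hKi] at hkey
      have hKipos : (0:ℝ) < (K:ℝ) - i := by
        have : (i:ℝ) < K := by exact_mod_cast (by omega : i < K)
        linarith
      -- from hcurv' and hkey: (K-i)(OPT - η F i) ≤ K (K-i) (F(i+1) - F i)
      have h2 : ((K:ℝ) - i) * (OPT - η * F i) ≤ ((K:ℝ) - i) * ((K:ℝ) * (F (i+1) - F i)) := by
        nlinarith [hcurv', hkey]
      have h3 : OPT - η * F i ≤ (K:ℝ) * (F (i+1) - F i) :=
        le_of_mul_le_mul_left (by linarith [h2]) hKipos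
      have h4 : (OPT - η * F i) / K ≤ F (i+1) - F i := by
        rw [div_le_iff₀ hK0]; linarith [h3]
      linarith [h4]
  have hc1 : c ≤ 1 := by
    simp only [hc]
    have : 0 < η / K := div_pos hη0 hK0
    linarith
  have main : ∀ i, i ≤ K → (1/η) * (1 - c^i) * OPT ≤ F i := by
    intro i
    induction i with
    | zero => intro _; simp [hF0]
    | succ i ih =>
      intro hi
      have h1 := ih (by omega)
      have h2 := step i hi
      have h3 : c * ((1/η) * (1 - c^i) * OPT) ≤ c * F i :=
        mul_le_mul_of_nonneg_left h1 hc0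
      have halg : (1/η) * (1 - c^(i+1)) * OPT = c * ((1/η) * (1 - c^i) * OPT) + OPT / K := by
        rw [hc, pow_succ]
        field_simp
        ring
      have hstep' : c * F i + OPT / K ≤ F (i+1) := by
        have : F i + (OPT - η * F i) / K = c * F i + OPT / K := by
          rw [hc]; field_simp; ring
        linarith [step i hi, this.symm.le, this.le]
      rw [halg]
      linarith
  exact main K le_rfl
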